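/- arXiv:1606.08004 — 3 statements merged into one kernel-verified Lean document; each statement's English description precedes it below -/
import Mathlib

section
/- There exists a constant C > 0 such that for every r ∈ (0, 1/2), (1/C)·|log r| ≤ ‖x ↦ 1/|x|‖_{L^{2,1}(𝔻 ∖ B̄(0,r))} ≤ C·|log r|, where the norm is taken on the annulus 𝔻 ∖ B̄(0,r). -/
open MeasureTheory Metric Set
open scoped ENNReal

noncomputable section

abbrev E2 := EuclideanSpace ℝ (Fin 2)

/-- Distribution function of `f` restricted to `Ω` with respect to the measure `μ`. -/
def distribFn {α E : Type*} [MeasurableSpace α] (μ : Measure α) (Ω : Set α)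
    [NormedAddCommGroup E] (f : α → E) (s : ℝ) : ℝ≥0∞ :=
  μ {x ∈ Ω | s < ‖f x‖}

/-- Decreasing rearrangement of `|f|` restricted to `Ω`. -/
def decRearr {α E : Type*} [MeasurableSpace α] (μ : Measure α) (Ω : Set α)
    [NormedAddCommGroup E] (f : α → E) (t : ℝ) : ℝ :=
  sInf {s : ℝ | 0 ≤ s ∧ distribFn μ Ω f s ≤ ENNReal.ofReal t}

/-- The Lorentz `L^{2,1}` norm of `f` on `Ω` :
`‖f‖_{L^{2,1}(Ω)} = ∫₀^∞ t^{1/2} f^*(t) dt/t`. -/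
def L21Norm {α E : Type*} [MeasurableSpace α] (μ : Measure α) (Ω : Set α)
    [NormedAddCommGroup E] (f : α → E) : ℝ≥0∞ :=
  ∫⁻ t in Set.Ioi (0 : ℝ), ENNReal.ofReal (t ^ ((1 : ℝ) / 2) * decRearr μ Ω f t / t)

namespace AuxL21

open Real

lemma vol_ball (R : ℝ) (hR : 0 ≤ R) :
    volume (ball (0 : E2) R) = ENNReal.ofReal (π * R ^ 2) := by
  rw [EuclideanSpace.volume_ball]
  simp only [Fintype.card_fin]
  rw [show ((2 : ℕ) : ℝ) / 2 + 1 = 2 by norm_num, Real.Gamma_two, sq_sqrt pi_nonneg]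
  rw [← ENNReal.ofReal_pow hR, ← ENNReal.ofReal_mul (by positivity)]
  ring_nf

lemma vol_closedBall (R : ℝ) (hR : 0 ≤ R) :
    volume (closedBall (0 : E2) R) = ENNReal.ofReal (π * R ^ 2) := by
  rw [Measure.addHaar_closedBall_eq_addHaar_ball, vol_ball R hR]

/-- Abbreviation for the annulus. -/
def Ann (r : ℝ) : Set E2 := ball (0 : E2) 1 \ closedBall 0 r

/-- Abbreviation: the function. -/
def f : E2 → ℝ := fun x => 1 / ‖x‖

/-- The distribution function of `f` on the annulus. -/
def D (r : ℝ) : ℝ → ℝ≥0∞ := distribFn volume (Ann r) f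

/-- The decreasing rearrangement of `f` on the annulus. -/
def g (r : ℝ) : ℝ → ℝ := decRearr volume (Ann r) f

lemma mem_Ann {r : ℝ} {x : E2} (hx : x ∈ Ann r) : r < ‖x‖ ∧ ‖x‖ < 1 := by
  obtain ⟨h1, h2⟩ := hx
  rw [mem_ball, dist_zero_right] at h1
  rw [mem_closedBall, dist_zero_right] at h2
  exact ⟨lt_of_not_ge h2, h1⟩

lemma norm_f {x : E2} : ‖f x‖ = 1 / ‖x‖ := by
  simp only [f, Real.norm_eq_abs]
  exact abs_of_nonneg (by positivity)

lemma D_le_ball {r : ℝ} (hr : 0 < r) {s : ℝ} (hs : 0 < s) :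
    D r s ≤ volume (ball (0 : E2) (1 / s)) := by
  apply measure_mono
  rintro x ⟨hx, hlt⟩
  have hxr := (mem_Ann hx).1
  have hx0 : 0 < ‖x‖ := hr.trans hxr
  rw [norm_f] at hlt
  rw [mem_ball, dist_zero_right]
  rw [lt_div_iff₀ hx0] at hlt
  rw [lt_div_iff₀ hs]
  linarith

lemma D_inv_r {r : ℝ} (hr : 0 < r) : D r (1 / r) = 0 := by
  have : {x ∈ Ann r | 1 / r < ‖f x‖} = ∅ := by
    ext x
    simp only [mem_setOf_eq, mem_empty_iff_false, iff_false, not_and]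
    intro hx
    have hxr := (mem_Ann hx).1
    have hx0 : 0 < ‖x‖ := hr.trans hxr
    rw [norm_f, not_lt]
    exact (one_div_le_one_div_of_le hr hxr.le)
  rw [D, distribFn, this, measure_empty]

lemma g_nonneg (r t : ℝ) : 0 ≤ g r t :=
  Real.sInf_nonneg fun _ hs => hs.1

lemma g_le {r : ℝ} {t s : ℝ} (hs : 0 ≤ s) (h : D r s ≤ ENNReal.ofReal t) :
    g r t ≤ s :=
  csInf_le ⟨0, fun _ hx => hx.1⟩ ⟨hs, h⟩

lemma le_g {r : ℝ} (hr : 0 < r) {t s₀ : ℝ}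
    (h : ∀ s, 0 ≤ s → D r s ≤ ENNReal.ofReal t → s₀ ≤ s) : s₀ ≤ g r t := by
  have hmem : (1 / r) ∈ {s : ℝ | 0 ≤ s ∧ distribFn volume (Ann r) f s ≤ ENNReal.ofReal t} :=
    ⟨by positivity, by
      rw [show distribFn volume (Ann r) f (1 / r) = D r (1 / r) from rfl, D_inv_r hr]
      exact zero_le⟩
  refine le_csInf ⟨1 / r, hmem⟩ ?_
  rintro s ⟨hs0, hsD⟩
  exact h s hs0 hsD

lemma g_le_inv_r {r : ℝ} (hr : 0 < r) (t : ℝ) : g r t ≤ 1 / r :=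
  g_le (by positivity) (by rw [D_inv_r hr]; exact zero_le)

lemma g_le_sqrt {r : ℝ} (hr : 0 < r) {t : ℝ} (ht : 0 < t) :
    g r t ≤ Real.sqrt π / Real.sqrt t := by
  have hs : 0 < Real.sqrt π / Real.sqrt t := by positivity
  apply g_le hs.le
  calc D r (Real.sqrt π / Real.sqrt t) ≤ volume (ball (0 : E2) (1 / (Real.sqrt π / Real.sqrt t))) :=
        D_le_ball hr hs
    _ = ENNReal.ofReal t := by
        rw [vol_ball _ (by positivity), one_div_div]
        congr 1
        rw [div_pow, sq_sqrt ht.le, sq_sqrt pi_nonneg, mul_div_cancel₀ _ pi_ne_zero]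

lemma g_eq_zero {r : ℝ} (hr : 0 < r) {t : ℝ} (ht : π ≤ t) : g r t = 0 := by
  refine le_antisymm (g_le le_rfl ?_) (g_nonneg r t)
  calc D r 0 ≤ volume (ball (0 : E2) 1) := by
        apply measure_mono; rintro x ⟨hx, _⟩; exact hx.1
    _ = ENNReal.ofReal π := by rw [vol_ball _ zero_le_one]; norm_num
    _ ≤ ENNReal.ofReal t := ENNReal.ofReal_le_ofReal ht

lemma sqrt_le_g {r : ℝ} (hr : 0 < r) {t : ℝ} (ht1 : π * r ^ 2 < t) (ht2 : t < π / 2) :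
    Real.sqrt (π / 2) / Real.sqrt t ≤ g r t := by
  have ht0 : 0 < t := lt_of_le_of_lt (by positivity) ht1
  apply le_g hr
  intro s hs0 hsD
  by_contra hcon
  push_neg at hcon
  set ρ : ℝ := Real.sqrt (2 * t / π) with hρ
  have hρ0 : 0 < ρ := by positivity
  have hρ2 : ρ ^ 2 = 2 * t / π := Real.sq_sqrt (by positivity)
  have hrρ : r < ρ := by
    have : r ^ 2 < ρ ^ 2 := by
      rw [hρ2]
      rw [lt_div_iff₀ pi_pos]
      nlinarith
    nlinarith [sq_nonneg (ρ - r)]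
  have hρ1 : ρ < 1 := by
    have : ρ ^ 2 < 1 := by rw [hρ2]; rw [div_lt_one pi_pos]; linarith
    nlinarith
  have hinv : Real.sqrt (π / 2) / Real.sqrt t = 1 / ρ := by
    rw [hρ, one_div, ← Real.sqrt_inv, ← Real.sqrt_div' _ (by positivity)]
    · congr 1
      field_simp
    
  -- the annulus ball ρ \ closedBall r is inside the superlevel set
  have hsub : ball (0 : E2) ρ \ closedBall 0 r ⊆ {x ∈ Ann r | s < ‖f x‖} := by
    rintro x ⟨hx1, hx2⟩
    rw [mem_ball, dist_zero_right] at hx1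
    rw [mem_closedBall, dist_zero_right, not_le] at hx2
    have hx0 : 0 < ‖x‖ := hr.trans hx2
    constructor
    · exact ⟨by rw [mem_ball, dist_zero_right]; linarith, by
        rw [mem_closedBall, dist_zero_right]; exact not_le.mpr hx2⟩
    · rw [norm_f]
      have h1 : 1 / ρ < 1 / ‖x‖ := one_div_lt_one_div_of_lt hx0 hx1
      rw [hinv] at hcon
      linarith
  have hvol : volume (ball (0 : E2) ρ \ closedBall 0 r) = ENNReal.ofReal (2 * t - π * r ^ 2) := by
    rw [measure_diff (closedBall_subset_ball hrρ) measurableSet_closedBall.nullMeasurableSet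
      (by rw [vol_closedBall _ hr.le]; exact ENNReal.ofReal_ne_top),
      vol_ball _ hρ0.le, vol_closedBall _ hr.le, ← ENNReal.ofReal_sub _ (by positivity)]
    congr 1
    rw [hρ2]
    field_simp
  have hge : ENNReal.ofReal (2 * t - π * r ^ 2) ≤ D r s := by
    rw [← hvol]; exact measure_mono hsub
  have : ENNReal.ofReal t < ENNReal.ofReal (2 * t - π * r ^ 2) := by
    rw [ENNReal.ofReal_lt_ofReal_iff (by linarith)]
    linarith
  exact absurd (hge.trans hsD) (not_le.mpr this)

lemma lint_log {c a b : ℝ} (ha : 0 < a) (hab : a < b) :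
    ∫⁻ t in Ioo a b, ENNReal.ofReal (c * (1 / t)) = ENNReal.ofReal (c * Real.log (b / a)) := by
  have hInt : IntegrableOn (fun t : ℝ => c * (1 / t)) (Ioo a b) := by
    apply IntegrableOn.mono_set _ Ioo_subset_Ioc_self
    rw [← intervalIntegrable_iff_integrableOn_Ioc_of_le hab.le]
    apply ContinuousOn.intervalIntegrable
    apply continuousOn_const.mul
    apply continuousOn_const.div continuousOn_id
    intro x hx
    rw [uIcc_of_le hab.le] at hx
    exact ne_of_gt (lt_of_lt_of_le ha hx.1)
  by_cases hc : 0 ≤ c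
  · rw [← ofReal_integral_eq_lintegral_ofReal hInt ?_]
    · congr 1
      rw [← integral_Ioc_eq_integral_Ioo, ← intervalIntegral.integral_of_le hab.le,
        intervalIntegral.integral_const_mul, integral_one_div]
      rw [uIcc_of_le hab.le]
      intro h
      exact absurd h.1 (not_le.mpr ha)
    · filter_upwards [ae_restrict_mem measurableSet_Ioo] with t ht
      have h0 : 0 < t := ha.trans ht.1
      positivity
  · push_neg at hc
    have hlog : 0 < Real.log (b / a) := Real.log_pos (by rw [lt_div_iff₀ ha]; linarith)
    have h1 : ENNReal.ofReal (c * Real.log (b / a)) = 0 := by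
      rw [ENNReal.ofReal_eq_zero]
      nlinarith
    rw [h1]
    rw [← lintegral_zero (μ := volume.restrict (Ioo a b))]
    apply setLIntegral_congr_fun measurableSet_Ioo
    intro t ht
    rw [ENNReal.ofReal_eq_zero]
    have h0 : 0 < t := ha.trans ht.1
    have : 0 < 1 / t := by positivity
    nlinarith

lemma lint_rpow {r : ℝ} (hr0 : 0 < r) :
    ∫⁻ t in Ioc 0 (π * r ^ 2), ENNReal.ofReal (t ^ (-(1:ℝ)/2) / r)
      = ENNReal.ofReal (2 * Real.sqrt π) := by
  have ha : 0 < π * r ^ 2 := by positivity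
  have hInt : IntegrableOn (fun t : ℝ => t ^ (-(1:ℝ)/2) / r) (Ioc 0 (π * r ^ 2)) := by
    rw [← intervalIntegrable_iff_integrableOn_Ioc_of_le ha.le]
    exact (intervalIntegral.intervalIntegrable_rpow' (by norm_num)).div_const r
  rw [← ofReal_integral_eq_lintegral_ofReal hInt ?_]
  · congr 1
    rw [← intervalIntegral.integral_of_le ha.le, intervalIntegral.integral_div,
      integral_rpow (Or.inl (by norm_num))]
    rw [show -(1:ℝ)/2 + 1 = 1/2 by norm_num, Real.zero_rpow (by norm_num : (1:ℝ)/2 ≠ 0),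
      ← Real.sqrt_eq_rpow, Real.sqrt_mul pi_nonneg, Real.sqrt_sq hr0.le]
    field_simp
    ring
  · filter_upwards [ae_restrict_mem measurableSet_Ioc] with t ht
    have h0 : 0 ≤ t := ht.1.le
    positivity

end AuxL21

open Real

/-- There is a constant `C > 0` such that for all `r ∈ (0,1/2)`,
`(1/C)·|log r| ≤ ‖x ↦ 1/|x|‖_{L^{2,1}(𝔻 ∖ B̄(0,r))} ≤ C·|log r|`. -/
theorem L21_one_div_norm_annulus :
    ∃ C : ℝ, 0 < C ∧ ∀ r : ℝ, r ∈ Set.Ioo (0 : ℝ) (1 / 2) →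
      ENNReal.ofReal (|Real.log r| / C) ≤
          L21Norm volume (ball (0 : E2) 1 \ closedBall 0 r) (fun x => 1 / ‖x‖) ∧
        L21Norm volume (ball (0 : E2) 1 \ closedBall 0 r) (fun x => 1 / ‖x‖) ≤
          ENNReal.ofReal (C * |Real.log r|) := by
  refine ⟨20, by norm_num, fun r hr => ?_⟩
  obtain ⟨hr0, hr2⟩ := hr
  have hπ := Real.pi_pos
  set L := |Real.log r| with hLdef
  have hlogr : Real.log r < 0 := Real.log_neg hr0 (by linarith)
  have hL : L = -Real.log r := abs_of_neg hlogr
  have hL2 : Real.log 2 ≤ L := by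
    have h : Real.log r < Real.log (1 / 2) := Real.log_lt_log hr0 hr2
    rw [Real.log_div one_ne_zero two_ne_zero, Real.log_one] at h
    linarith
  have hlog2 : (0.6931471803 : ℝ) < Real.log 2 := Real.log_two_gt_d9
  have hLpos : 0 < L := by linarith
  set a := π * r ^ 2 with hadef
  have ha0 : 0 < a := by positivity
  have hr2' : r ^ 2 < 1 / 4 := by nlinarith
  have haπ2 : a < π / 2 := by nlinarith
  have haπ : a < π := by nlinarith
  have hloga : Real.log a = Real.log π + 2 * Real.log r := by
    rw [hadef, Real.log_mul (ne_of_gt hπ) (by positivity), Real.log_pow]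
    push_cast; ring
  have hnorm : L21Norm volume (ball (0 : E2) 1 \ closedBall 0 r) (fun x => 1 / ‖x‖)
      = ∫⁻ t in Set.Ioi (0 : ℝ), ENNReal.ofReal
          (t ^ ((1 : ℝ) / 2) * AuxL21.g r t / t) := rfl
  have sqrtpi2 : (1 : ℝ) ≤ Real.sqrt (π / 2) := by
    rw [show (1:ℝ) = Real.sqrt 1 by simp]
    exact Real.sqrt_le_sqrt (by linarith [Real.two_le_pi])
  have sqrtpi4 : Real.sqrt π ≤ 2 := by
    rw [show (2:ℝ) = Real.sqrt 4 by
      rw [show (4:ℝ) = 2 ^ 2 by norm_num, Real.sqrt_sq (by norm_num)]]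
    exact Real.sqrt_le_sqrt Real.pi_le_four
  constructor
  · -- lower bound
    rw [hnorm]
    have step1 : ∫⁻ t in Ioo a (π / 2),
        ENNReal.ofReal (Real.sqrt (π / 2) * (1 / t)) ≤
        ∫⁻ t in Ioo a (π / 2), ENNReal.ofReal (t ^ ((1 : ℝ) / 2) * AuxL21.g r t / t) := by
      apply setLIntegral_mono' measurableSet_Ioo
      intro t ht
      have ht0 : 0 < t := ha0.trans ht.1
      have hst : (0:ℝ) < Real.sqrt t := Real.sqrt_pos.mpr ht0
      apply ENNReal.ofReal_le_ofReal
      have hg := AuxL21.sqrt_le_g hr0 ht.1 ht.2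
      rw [← Real.sqrt_eq_rpow]
      calc Real.sqrt (π / 2) * (1 / t)
          = Real.sqrt t * (Real.sqrt (π / 2) / Real.sqrt t) / t := by
            field_simp
        _ ≤ Real.sqrt t * AuxL21.g r t / t := by gcongr
    calc ENNReal.ofReal (L / 20)
        ≤ ENNReal.ofReal (Real.sqrt (π / 2) * Real.log ((π / 2) / a)) := by
          apply ENNReal.ofReal_le_ofReal
          have hlogq : Real.log ((π / 2) / a) = 2 * L - Real.log 2 := by
            rw [Real.log_div (by positivity) (ne_of_gt ha0),
              Real.log_div (ne_of_gt hπ) two_ne_zero, hloga]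
            rw [hL]; ring
          rw [hlogq]
          nlinarith
      _ = ∫⁻ t in Ioo a (π / 2),
            ENNReal.ofReal (Real.sqrt (π / 2) * (1 / t)) := (AuxL21.lint_log ha0 haπ2).symm
      _ ≤ ∫⁻ t in Ioo a (π / 2),
            ENNReal.ofReal (t ^ ((1 : ℝ) / 2) * AuxL21.g r t / t) := step1
      _ ≤ _ := lintegral_mono_set (fun t ht => ha0.trans ht.1)
  · -- upper bound
    rw [hnorm]
    rw [show Set.Ioi (0:ℝ) = Ioc 0 a ∪ Ioi a from (Ioc_union_Ioi_eq_Ioi ha0.le).symm,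
      lintegral_union measurableSet_Ioi (Set.Ioc_disjoint_Ioi le_rfl)]
    rw [show Set.Ioi a = Ioo a π ∪ Ici π from (Ioo_union_Ici_eq_Ioi haπ).symm,
      lintegral_union measurableSet_Ici (by
        rw [Set.disjoint_left]; intro t h1 h2; exact absurd h2 (not_le.mpr h1.2))]
    have P1 : ∫⁻ t in Ioc 0 a, ENNReal.ofReal (t ^ ((1 : ℝ) / 2) * AuxL21.g r t / t)
        ≤ ENNReal.ofReal (2 * Real.sqrt π) := by
      rw [← AuxL21.lint_rpow hr0]
      apply setLIntegral_mono' measurableSet_Ioc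
      intro t ht
      apply ENNReal.ofReal_le_ofReal
      have ht0 : 0 < t := ht.1
      have h2 : t ^ (-(1:ℝ)/2) = t ^ ((1:ℝ)/2) / t := by
        rw [show -(1:ℝ)/2 = (1:ℝ)/2 - 1 by norm_num, Real.rpow_sub ht0, Real.rpow_one]
      have h3 : (0:ℝ) ≤ t ^ ((1:ℝ)/2) := Real.rpow_nonneg ht0.le _
      calc t ^ ((1:ℝ)/2) * AuxL21.g r t / t
          ≤ t ^ ((1:ℝ)/2) * (1 / r) / t := by
            gcongr
            exact AuxL21.g_le_inv_r hr0 t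
        _ = t ^ (-(1:ℝ)/2) / r := by rw [h2]; ring
    have P2 : ∫⁻ t in Ioo a π, ENNReal.ofReal (t ^ ((1 : ℝ) / 2) * AuxL21.g r t / t)
        ≤ ENNReal.ofReal (Real.sqrt π * (2 * L)) := by
      have : ∫⁻ t in Ioo a π, ENNReal.ofReal (t ^ ((1 : ℝ) / 2) * AuxL21.g r t / t)
          ≤ ∫⁻ t in Ioo a π, ENNReal.ofReal (Real.sqrt π * (1 / t)) := by
        apply setLIntegral_mono' measurableSet_Ioo
        intro t ht
        have ht0 : 0 < t := ha0.trans ht.1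
        have hst : (0:ℝ) < Real.sqrt t := Real.sqrt_pos.mpr ht0
        apply ENNReal.ofReal_le_ofReal
        have hg := AuxL21.g_le_sqrt hr0 ht0
        rw [← Real.sqrt_eq_rpow]
        calc Real.sqrt t * AuxL21.g r t / t
            ≤ Real.sqrt t * (Real.sqrt π / Real.sqrt t) / t := by gcongr
          _ = Real.sqrt π * (1 / t) := by field_simp
      refine this.trans ?_
      rw [AuxL21.lint_log ha0 haπ]
      apply ENNReal.ofReal_le_ofReal
      have hlogq : Real.log (π / a) = 2 * L := by
        rw [Real.log_div (ne_of_gt hπ) (ne_of_gt ha0), hloga, hL]; ring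
      rw [hlogq]
    have P3 : ∫⁻ t in Ici π, ENNReal.ofReal (t ^ ((1 : ℝ) / 2) * AuxL21.g r t / t) = 0 := by
      rw [← lintegral_zero (μ := volume.restrict (Ici π))]
      apply setLIntegral_congr_fun measurableSet_Ici
      intro t ht
      beta_reduce
      rw [AuxL21.g_eq_zero hr0 ht]
      simp
    calc _ ≤ ENNReal.ofReal (2 * Real.sqrt π) +
          (ENNReal.ofReal (Real.sqrt π * (2 * L)) + 0) :=
          add_le_add P1 (add_le_add P2 (le_of_eq P3))
      _ ≤ ENNReal.ofReal (20 * L) := by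
          rw [add_zero, ← ENNReal.ofReal_add (by positivity) (by positivity)]
          apply ENNReal.ofReal_le_ofReal
          have hsp : (0:ℝ) ≤ Real.sqrt π := Real.sqrt_nonneg π
          nlinarith
end
end

section
/- There exists a constant C > 0 such that for every ε ∈ (0, 1/4) and every integer m the following holds for the function f_m(x) = |x|^m on the annulus B(0,1/2) ∖ B̄(0,2ε): if m ≤ −2 then ‖f_m‖_{L^{2,1}(B(0,1/2) ∖ B̄(0,2ε))} ≤ C·(2ε)^{m+1}, and if m ≥ 0 then ‖f_m‖_{L^{2,1}(B(0,1/2) ∖ B̄(0,2ε))} ≤ C·2^{−m}. -/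
open MeasureTheory Metric Set
open scoped ENNReal

noncomputable section

section AuxLemmas
open Real

lemma decRearr_le {α E : Type*} [MeasurableSpace α] {μ : Measure α} {Ω : Set α}
    [NormedAddCommGroup E] {f : α → E} {t g : ℝ} (hg : 0 ≤ g)
    (h : distribFn μ Ω f g ≤ ENNReal.ofReal t) : decRearr μ Ω f t ≤ g :=
  csInf_le ⟨0, fun _ hs => hs.1⟩ ⟨hg, h⟩

lemma L21Norm_le {α E : Type*} [MeasurableSpace α] {μ : Measure α} {Ω : Set α}
    [NormedAddCommGroup E] {f : α → E} {g : ℝ → ℝ}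
    (hg : ∀ t, 0 < t → 0 ≤ g t ∧ distribFn μ Ω f (g t) ≤ ENNReal.ofReal t) :
    L21Norm μ Ω f ≤ ∫⁻ t in Set.Ioi (0:ℝ), ENNReal.ofReal (t ^ ((1:ℝ)/2) * g t / t) := by
  refine setLIntegral_mono' measurableSet_Ioi fun t ht => ?_
  replace ht : (0:ℝ) < t := ht
  have h2 : decRearr μ Ω f t ≤ g t := decRearr_le (hg t ht).1 (hg t ht).2
  have h0 : 0 ≤ decRearr μ Ω f t := Real.sInf_nonneg fun _ hs => hs.1
  refine ENNReal.ofReal_le_ofReal ?_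
  gcongr

lemma E2_volume_ball (r : ℝ) (hr : 0 ≤ r) :
    volume (ball (0:E2) r) = ENNReal.ofReal (π * r^2) := by
  rw [EuclideanSpace.volume_ball]
  simp only [Fintype.card_fin]
  rw [show ((2:ℕ):ℝ)/2 + 1 = 2 by norm_num, Real.Gamma_two, Real.sq_sqrt pi_nonneg,
    ← ENNReal.ofReal_pow hr, ← ENNReal.ofReal_mul (by positivity)]
  ring_nf

lemma E2_volume_closedBall (r : ℝ) (hr : 0 ≤ r) :
    volume (closedBall (0:E2) r) = ENNReal.ofReal (π * r^2) := by
  rw [EuclideanSpace.volume_closedBall]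
  simp only [Fintype.card_fin]
  rw [show ((2:ℕ):ℝ)/2 + 1 = 2 by norm_num, Real.Gamma_two, Real.sq_sqrt pi_nonneg,
    ← ENNReal.ofReal_pow hr, ← ENNReal.ofReal_mul (by positivity)]
  ring_nf

lemma lint_split (V : ℝ) (hV : 0 ≤ V) (f : ℝ → ℝ≥0∞) :
    ∫⁻ t in Ioi (0:ℝ), f t = (∫⁻ t in Ioc (0:ℝ) V, f t) + ∫⁻ t in Ioi V, f t := by
  rw [← Ioc_union_Ioi_eq_Ioi hV, lintegral_union measurableSet_Ioi Ioc_disjoint_Ioi_same]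

lemma lint_Ioc_eq (V c : ℝ) (hV : 0 ≤ V) (hc : 0 ≤ c) :
    ∫⁻ t in Set.Ioc (0:ℝ) V, ENNReal.ofReal (c * t ^ (-(1:ℝ)/2)) =
      ENNReal.ofReal (c * (2 * Real.sqrt V)) := by
  have hint : IntegrableOn (fun t : ℝ => t ^ (-(1:ℝ)/2)) (Ioc 0 V) := by
    rw [← intervalIntegrable_iff_integrableOn_Ioc_of_le hV]
    exact intervalIntegral.intervalIntegrable_rpow' (by norm_num)
  rw [← ofReal_integral_eq_lintegral_ofReal (hint.const_mul c) ?_]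
  · congr 1
    rw [integral_const_mul, ← intervalIntegral.integral_of_le hV,
      integral_rpow (Or.inl (by norm_num))]
    rw [show -(1:ℝ)/2 + 1 = 1/2 by norm_num, Real.zero_rpow (by norm_num),
      ← Real.sqrt_eq_rpow]
    ring
  · filter_upwards [ae_restrict_mem measurableSet_Ioc] with t ht
    exact mul_nonneg hc (Real.rpow_nonneg ht.1.le _)

lemma lint_Ioi_eq (t₀ c a : ℝ) (ht₀ : 0 < t₀) (ha : a < -1) (hc : 0 ≤ c) :
    ∫⁻ t in Set.Ioi t₀, ENNReal.ofReal (c * t ^ a) =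
      ENNReal.ofReal (c * (-t₀ ^ (a+1) / (a+1))) := by
  rw [← ofReal_integral_eq_lintegral_ofReal
      (((integrableOn_Ioi_rpow_of_lt ha ht₀)).const_mul c) ?_]
  · rw [integral_const_mul, integral_Ioi_rpow_of_lt ha ht₀]
  · filter_upwards [ae_restrict_mem measurableSet_Ioi] with t ht
    exact mul_nonneg hc (Real.rpow_nonneg (ht₀.trans ht).le _)

lemma aux_div (t : ℝ) (ht : 0 < t) (c : ℝ) :
    t ^ ((1:ℝ)/2) * c / t = c * t ^ (-(1:ℝ)/2) := by
  rw [show (-(1:ℝ)/2) = (1:ℝ)/2 + (-1) by norm_num, Real.rpow_add ht, Real.rpow_neg_one]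
  field_simp

lemma case_nonneg (ε : ℝ) (hε0 : 0 < ε) (m : ℤ) (hm : 0 ≤ m) :
    L21Norm volume (ball (0 : E2) (1 / 2) \ closedBall 0 (2 * ε)) (fun x => ‖x‖ ^ m) ≤
      ENNReal.ofReal (100 * 2 ^ (-m)) := by
  set Ω := ball (0 : E2) (1 / 2) \ closedBall 0 (2 * ε) with hΩdef
  set c : ℝ := 2 ^ (-m) with hcdef
  have hc0 : 0 < c := zpow_pos two_pos _
  set g : ℝ → ℝ := fun t => if t ≤ π/4 then c else 0 with hgdef
  have hΩ : volume Ω ≤ ENNReal.ofReal (π/4) := by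
    refine le_trans (measure_mono diff_subset) ?_
    rw [E2_volume_ball _ (by norm_num)]
    apply le_of_eq; congr 1; ring
  have hg : ∀ t, 0 < t → 0 ≤ g t ∧
      distribFn volume Ω (fun x : E2 => (‖x‖ ^ m : ℝ)) (g t) ≤ ENNReal.ofReal t := by
    intro t ht
    by_cases htπ : t ≤ π/4
    · refine ⟨by simp [hgdef, htπ, hc0.le], ?_⟩
      have hempty : {x : E2 | x ∈ Ω ∧ g t < ‖(‖x‖ ^ m : ℝ)‖} = ∅ := by
        ext x
        simp only [mem_setOf_eq, mem_empty_iff_false, iff_false, not_and]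
        intro hx
        have hx2 : ‖x‖ < 1/2 := by
          have := hx.1; rwa [mem_ball, dist_zero_right] at this
        have hxn : (0:ℝ) ≤ ‖x‖ := norm_nonneg x
        have h1 : ‖x‖ ^ m ≤ (1/2 : ℝ) ^ m := by
          lift m to ℕ using hm with n
          rw [zpow_natCast, zpow_natCast]
          exact pow_le_pow_left₀ hxn hx2.le n
        have h2 : ((1:ℝ)/2) ^ m = c := by
          rw [hcdef, one_div, inv_zpow, ← zpow_neg]
        rw [Real.norm_of_nonneg (zpow_nonneg hxn m)]
        simp only [hgdef, if_pos htπ]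
        exact not_lt.2 (h1.trans h2.le)
      rw [distribFn]
      simp only [hempty, measure_empty]
      exact zero_le
    · refine ⟨by simp [hgdef, htπ], ?_⟩
      push_neg at htπ
      refine le_trans (measure_mono fun x hx => hx.1) (hΩ.trans ?_)
      exact ENNReal.ofReal_le_ofReal htπ.le
  refine le_trans (L21Norm_le hg) ?_
  rw [lint_split (π/4) (by positivity)]
  have hIoi : (∫⁻ t in Ioi (π/4), ENNReal.ofReal (t ^ ((1:ℝ)/2) * g t / t)) = 0 := by
    rw [setLIntegral_congr_fun measurableSet_Ioi
      (fun t (ht : π/4 < t) => ?_), lintegral_zero]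
    have : g t = 0 := by simp [hgdef, not_le.2 ht]
    simp [this]
  rw [hIoi, add_zero]
  have hIoc : (∫⁻ t in Ioc (0:ℝ) (π/4), ENNReal.ofReal (t ^ ((1:ℝ)/2) * g t / t)) ≤
      ENNReal.ofReal (c * (2 * Real.sqrt (π/4))) := by
    rw [← lint_Ioc_eq (π/4) c (by positivity) hc0.le]
    refine setLIntegral_mono' measurableSet_Ioc fun t ht => ?_
    have hgt : g t = c := by simp [hgdef, ht.2]
    rw [hgt, aux_div t ht.1]
  refine hIoc.trans (ENNReal.ofReal_le_ofReal ?_)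
  have hs : Real.sqrt (π/4) ≤ 1 := by
    rw [show (1:ℝ) = Real.sqrt 1 by simp]
    exact Real.sqrt_le_sqrt (by nlinarith [pi_le_four])
  nlinarith [hc0.le]

lemma case_neg (ε : ℝ) (hε0 : 0 < ε) (hε4 : ε < 1/4) (m : ℤ) (hm : m ≤ -2) :
    L21Norm volume (ball (0 : E2) (1 / 2) \ closedBall 0 (2 * ε)) (fun x => ‖x‖ ^ m) ≤
      ENNReal.ofReal (100 * (2 * ε) ^ (m + 1)) := by
  set Ω := ball (0 : E2) (1 / 2) \ closedBall 0 (2 * ε) with hΩdef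
  set X : ℝ := 2 * ε with hXdef
  have hX0 : 0 < X := by positivity
  have hmR : (m : ℝ) ≤ -2 := by exact_mod_cast hm
  set r : ℝ → ℝ := fun t => Real.sqrt (t / π + X ^ 2) with hrdef
  set g : ℝ → ℝ := fun t => r t ^ (m : ℝ) with hgdef
  have hr_pos : ∀ t, 0 < t → X < r t := by
    intro t ht
    have h1 : X = Real.sqrt (X ^ 2) := (Real.sqrt_sq hX0.le).symm
    rw [h1, hrdef]
    refine Real.sqrt_lt_sqrt (by positivity) ?_
    have : 0 < t / π := by positivity
    linarith
  have hg : ∀ t, 0 < t → 0 ≤ g t ∧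
      distribFn volume Ω (fun x : E2 => (‖x‖ ^ m : ℝ)) (g t) ≤ ENNReal.ofReal t := by
    intro t ht
    have hrt : X < r t := hr_pos t ht
    have hrt0 : 0 < r t := hX0.trans hrt
    refine ⟨Real.rpow_nonneg (Real.sqrt_nonneg _) _, ?_⟩
    have hsub : {x : E2 | x ∈ Ω ∧ g t < ‖(‖x‖ ^ m : ℝ)‖} ⊆ ball 0 (r t) \ closedBall 0 X := by
      rintro x ⟨hxΩ, hxg⟩
      have hxX : X < ‖x‖ := by
        have := hxΩ.2
        rw [mem_closedBall, dist_zero_right] at this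
        exact not_le.1 this
      have hx0 : 0 < ‖x‖ := hX0.trans hxX
      have hnorm : ‖(‖x‖ ^ m : ℝ)‖ = ‖x‖ ^ (m : ℝ) := by
        rw [Real.norm_of_nonneg (zpow_nonneg (norm_nonneg x) m), Real.rpow_intCast]
      rw [hnorm] at hxg
      have hlt : ‖x‖ < r t := by
        by_contra hcon
        push_neg at hcon
        have : ‖x‖ ^ (m : ℝ) ≤ r t ^ (m : ℝ) :=
          Real.rpow_le_rpow_of_nonpos hrt0 hcon (by linarith)
        exact absurd hxg (not_lt.2 (this.trans_eq rfl))
      constructor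
      · rwa [mem_ball, dist_zero_right]
      · rw [mem_closedBall, dist_zero_right]; exact not_le.2 hxX
    refine le_trans (measure_mono hsub) ?_
    have hmeas : volume (ball (0:E2) (r t) \ closedBall 0 X) = ENNReal.ofReal t := by
      rw [measure_diff (closedBall_subset_ball hrt) measurableSet_closedBall.nullMeasurableSet
        (by rw [E2_volume_closedBall _ hX0.le]; exact ENNReal.ofReal_ne_top),
        E2_volume_ball _ hrt0.le, E2_volume_closedBall _ hX0.le,
        ← ENNReal.ofReal_sub _ (by positivity)]
      congr 1
      have : r t ^ 2 = t / π + X ^ 2 := Real.sq_sqrt (by positivity)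
      rw [this]
      field_simp
      ring
    exact hmeas.le
  refine le_trans (L21Norm_le hg) ?_
  set t₀ : ℝ := X ^ 2 * π with ht₀def
  have ht₀0 : 0 < t₀ := by positivity
  rw [lint_split t₀ ht₀0.le]
  set c₁ : ℝ := X ^ (m : ℝ) with hc₁def
  have hc₁0 : 0 < c₁ := Real.rpow_pos_of_pos hX0 _
  set a : ℝ := ((m : ℝ) - 1) / 2 with hadef
  set c₂ : ℝ := π ^ (-(m : ℝ) / 2) with hc₂def
  have hc₂0 : 0 < c₂ := Real.rpow_pos_of_pos pi_pos _
  have ha : a < -1 := by rw [hadef]; linarith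
  -- g t = (t/π + X^2) ^ (m/2)
  have hgt : ∀ t, 0 < t → g t = (t / π + X ^ 2) ^ ((m : ℝ) / 2) := by
    intro t ht
    have hu : (0:ℝ) ≤ t / π + X ^ 2 := by positivity
    show Real.sqrt (t / π + X ^ 2) ^ (m:ℝ) = _
    rw [Real.sqrt_eq_rpow, ← Real.rpow_mul hu]
    congr 1; ring
  have hIoc : (∫⁻ t in Ioc (0:ℝ) t₀, ENNReal.ofReal (t ^ ((1:ℝ)/2) * g t / t)) ≤
      ENNReal.ofReal (c₁ * (2 * Real.sqrt t₀)) := by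
    rw [← lint_Ioc_eq t₀ c₁ ht₀0.le hc₁0.le]
    refine setLIntegral_mono' measurableSet_Ioc fun t ht => ?_
    refine ENNReal.ofReal_le_ofReal ?_
    rw [aux_div t ht.1]
    have hgle : g t ≤ c₁ := by
      rw [hgdef, hc₁def]
      exact Real.rpow_le_rpow_of_nonpos hX0 (hr_pos t ht.1).le (by linarith)
    exact mul_le_mul_of_nonneg_right hgle (Real.rpow_nonneg ht.1.le _)
  have hIoi : (∫⁻ t in Ioi t₀, ENNReal.ofReal (t ^ ((1:ℝ)/2) * g t / t)) ≤
      ENNReal.ofReal (c₂ * (-t₀ ^ (a+1) / (a+1))) := by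
    rw [← lint_Ioi_eq t₀ c₂ a ht₀0 ha hc₂0.le]
    refine setLIntegral_mono' measurableSet_Ioi fun t ht => ?_
    refine ENNReal.ofReal_le_ofReal ?_
    have ht0 : (0:ℝ) < t := ht₀0.trans ht
    rw [aux_div t ht0, hgt t ht0]
    have h1 : (t / π + X ^ 2) ^ ((m : ℝ) / 2) ≤ (t / π) ^ ((m : ℝ) / 2) :=
      Real.rpow_le_rpow_of_nonpos (by positivity) (by nlinarith) (by linarith)
    have h2 : (t / π) ^ ((m : ℝ) / 2) = c₂ * t ^ ((m:ℝ)/2) := by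
      rw [Real.div_rpow ht0.le pi_nonneg, hc₂def, div_eq_mul_inv,
        ← Real.rpow_neg pi_nonneg, mul_comm]
      congr 1
      rw [show -(m:ℝ)/2 = -((m:ℝ)/2) by ring]
    calc (t / π + X ^ 2) ^ ((m : ℝ) / 2) * t ^ (-(1:ℝ)/2)
        ≤ (t / π) ^ ((m : ℝ) / 2) * t ^ (-(1:ℝ)/2) :=
          mul_le_mul_of_nonneg_right h1 (Real.rpow_nonneg ht0.le _)
      _ = c₂ * t ^ a := by
          rw [h2, mul_assoc, ← Real.rpow_add ht0]
          congr 2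
          rw [hadef]; ring
  refine le_trans (add_le_add hIoc hIoi) ?_
  rw [← ENNReal.ofReal_add (by positivity) ?h2]
  case h2 =>
    have hb : a + 1 < 0 := by linarith
    have : 0 ≤ -t₀ ^ (a+1) / (a+1) := by
      rw [neg_div]
      rw [le_neg]
      exact (div_nonpos_of_nonneg_of_nonpos (Real.rpow_nonneg ht₀0.le _) hb.le).trans (by norm_num)
    positivity
  refine ENNReal.ofReal_le_ofReal ?_
  -- final arithmetic
  have hXm1 : X ^ ((m:ℝ) + 1) = X ^ (m + 1) := by
    rw [← Real.rpow_intCast X (m+1)]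
    push_cast; ring_nf
  have hXm1pos : (0:ℝ) < X ^ (m + 1) := zpow_pos hX0 _
  have hsqrtpi : Real.sqrt π ≤ 2 := by
    rw [show (2:ℝ) = Real.sqrt 4 by rw [show (4:ℝ) = 2^2 by norm_num, Real.sqrt_sq]; norm_num]
    exact Real.sqrt_le_sqrt pi_le_four
  have hterm1 : c₁ * (2 * Real.sqrt t₀) ≤ 4 * X ^ (m + 1) := by
    have h1 : Real.sqrt t₀ = X * Real.sqrt π := by
      rw [ht₀def, Real.sqrt_mul (sq_nonneg X), Real.sqrt_sq hX0.le]
    rw [h1, hc₁def]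
    have h2 : X ^ (m:ℝ) * (2 * (X * Real.sqrt π)) = 2 * Real.sqrt π * X ^ ((m:ℝ)+1) := by
      rw [Real.rpow_add_one hX0.ne']
      ring
    rw [h2, hXm1]
    nlinarith [Real.sqrt_nonneg π]
  have hterm2 : c₂ * (-t₀ ^ (a+1) / (a+1)) ≤ 4 * X ^ (m + 1) := by
    have hb : a + 1 = ((m:ℝ)+1)/2 := by rw [hadef]; ring
    have hbneg : a + 1 < 0 := by rw [hb]; linarith
    have ht₀pow : t₀ ^ (a+1) = X ^ ((m:ℝ)+1) * π ^ (a+1) := by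
      rw [ht₀def, Real.mul_rpow (sq_nonneg X) pi_nonneg]
      congr 1
      rw [← Real.rpow_natCast X 2, ← Real.rpow_mul hX0.le]
      congr 1
      rw [hb]; push_cast; ring
    have hc₂π : c₂ * π ^ (a+1) = Real.sqrt π := by
      rw [hc₂def, ← Real.rpow_add pi_pos, Real.sqrt_eq_rpow]
      congr 1
      rw [hb]; ring
    have hinv : -(1:ℝ) / (a+1) ≤ 2 := by
      rw [div_le_iff_of_neg hbneg, hb]
      have : (m:ℝ) + 1 ≤ -1 := by linarith
      linarith
    have hinv0 : 0 ≤ -(1:ℝ) / (a+1) := by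
      rw [neg_div]
      simp only [le_neg, neg_zero]
      exact div_nonpos_of_nonneg_of_nonpos (by norm_num) hbneg.le
    calc c₂ * (-t₀ ^ (a+1) / (a+1)) = (c₂ * π ^ (a+1)) * X ^ ((m:ℝ)+1) * (-1/(a+1)) := by
          rw [ht₀pow]; ring
      _ = Real.sqrt π * X ^ ((m:ℝ)+1) * (-1/(a+1)) := by rw [hc₂π]
      _ ≤ 2 * X ^ ((m:ℝ)+1) * 2 := by
          rw [hXm1]
          have h4 : Real.sqrt π * (-1/(a+1)) ≤ 4 := by nlinarith [Real.sqrt_nonneg π]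
          nlinarith [mul_le_mul_of_nonneg_right h4 hXm1pos.le]
      _ ≤ 4 * X ^ (m+1) := by rw [hXm1]; nlinarith
  nlinarith

end AuxLemmas

/-- There is a constant `C > 0` such that for every `ε ∈ (0,1/4)` and every integer `m`,
the function `f_m(x) = |x|^m` on the annulus `B(0,1/2) ∖ B̄(0,2ε)` satisfies
`‖f_m‖_{L^{2,1}} ≤ C (2ε)^{m+1}` when `m ≤ -2` and `‖f_m‖_{L^{2,1}} ≤ C 2^{-m}` when `m ≥ 0`. -/
theorem L21_norm_pow :
    ∃ C : ℝ, 0 < C ∧ ∀ ε : ℝ, ε ∈ Set.Ioo (0 : ℝ) (1 / 4) → ∀ m : ℤ,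
      (m ≤ -2 →
        L21Norm volume (ball (0 : E2) (1 / 2) \ closedBall 0 (2 * ε))
            (fun x => ‖x‖ ^ m) ≤
          ENNReal.ofReal (C * (2 * ε) ^ (m + 1))) ∧
      (0 ≤ m →
        L21Norm volume (ball (0 : E2) (1 / 2) \ closedBall 0 (2 * ε))
            (fun x => ‖x‖ ^ m) ≤
          ENNReal.ofReal (C * 2 ^ (-m))) := by
  refine ⟨100, by norm_num, fun ε hε m => ⟨fun hm => ?_, fun hm => ?_⟩⟩
  · exact case_neg ε hε.1 hε.2 m hm
  · exact case_nonneg ε hε.1 m hm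
end
end

section
/- Let h : ℂ ∖ {0} → ℂ be holomorphic, let d ∈ ℝ and C ≥ 1 be such that (1/C)·|z|^d ≤ |h(z)| ≤ C·|z|^d for all z ≠ 0. Then d is an integer and there exists c ∈ ℂ ∖ {0} such that h(z) = c·z^d for all z ≠ 0. If, moreover, h admits a holomorphic primitive on ℂ ∖ {0} (a holomorphic ψ : ℂ ∖ {0} → ℂ with ψ' = h), then d ≠ −1. -/
open Complex Set Function Filter Topology

lemma aux_const {F : ℂ → ℂ} (hF : DifferentiableOn ℂ F {(0:ℂ)}ᶜ) {M : ℝ}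
    (hM : ∀ z : ℂ, z ≠ 0 → ‖F z‖ ≤ M) {z w : ℂ} (hz : z ≠ 0) (hw : w ≠ 0) : F z = F w := by
  set G := Function.update F 0 (limUnder (𝓝[≠] (0:ℂ)) F) with hG
  have hset : (univ : Set ℂ) \ {0} = {(0:ℂ)}ᶜ := by
    ext x; simp
  have hGd : Differentiable ℂ G := by
    have := Complex.differentiableOn_update_limUnder_of_bddAbove (univ_mem : (univ : Set ℂ) ∈ 𝓝 0)
      (by rw [hset]; exact hF) ?_
    · rw [← differentiableOn_univ]; exact this
    · refine ⟨M, ?_⟩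
      rintro x ⟨y, hy, rfl⟩
      rw [hset] at hy
      exact hM y hy
  have hGeq : ∀ x : ℂ, x ≠ 0 → G x = F x := fun x hx => Function.update_of_ne hx _ _
  have hGb : Bornology.IsBounded (Set.range G) := by
    rw [isBounded_iff_forall_norm_le]
    refine ⟨max M ‖G 0‖, ?_⟩
    rintro x ⟨t, rfl⟩
    rcases eq_or_ne t 0 with rfl | ht
    · exact le_max_right _ _
    · rw [hGeq t ht]; exact le_trans (hM t ht) (le_max_left _ _)
  have := hGd.apply_eq_apply_of_bounded hGb z w
  rwa [hGeq z hz, hGeq w hw] at this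

lemma aux_rpow {e K : ℝ} (he : 0 < e) (hK : ∀ r : ℝ, 0 < r → r ^ e ≤ K) : False := by
  have hK1 : (1:ℝ) ≤ K := by simpa using hK 1 one_pos
  have hKpos : (0:ℝ) < K + 1 := by linarith
  have h1 := hK ((K + 1) ^ (1 / e)) (Real.rpow_pos_of_pos hKpos _)
  rw [← Real.rpow_mul hKpos.le, one_div_mul_cancel he.ne', Real.rpow_one] at h1
  linarith

/-- If `h` is holomorphic on `ℂ ∖ {0}` and `(1/C)|z|^d ≤ |h(z)| ≤ C|z|^d` for all `z ≠ 0`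
(with `d ∈ ℝ`, `C ≥ 1`), then `d` is an integer and `h(z) = c·z^d` for some nonzero constant
`c`; moreover if `h` admits a holomorphic primitive on `ℂ ∖ {0}`, then `d ≠ −1`. -/
theorem holomorphic_two_sided_power_bound
    (h : ℂ → ℂ) (hh : DifferentiableOn ℂ h {(0 : ℂ)}ᶜ)
    (d : ℝ) (C : ℝ) (hC : 1 ≤ C)
    (hlow : ∀ z : ℂ, z ≠ 0 → ‖z‖ ^ d / C ≤ ‖h z‖)
    (hup : ∀ z : ℂ, z ≠ 0 → ‖h z‖ ≤ C * ‖z‖ ^ d) :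
    (∃ n : ℤ, d = (n : ℝ) ∧ ∃ c : ℂ, c ≠ 0 ∧ ∀ z : ℂ, z ≠ 0 → h z = c * z ^ n) ∧
      ((∃ ψ : ℂ → ℂ, ∀ z : ℂ, z ≠ 0 → HasDerivAt ψ (h z) z) → d ≠ -1) := by
  have hC0 : (0:ℝ) < C := lt_of_lt_of_le one_pos hC
  -- h is nonvanishing
  have hne : ∀ z : ℂ, z ≠ 0 → h z ≠ 0 := by
    intro z hz h0
    have h1 : 0 < ‖z‖ ^ d / C :=
      div_pos (Real.rpow_pos_of_pos (norm_pos_iff.2 hz) d) hC0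
    have := hlow z hz
    rw [h0, norm_zero] at this
    linarith
  -- functional equation via Liouville
  have key : ∀ a z : ℂ, a ≠ 0 → z ≠ 0 → h (a * z) * h 1 = h a * h z := by
    intro a z ha hz
    set F : ℂ → ℂ := fun w => h (a * w) / h w with hF
    have hFd : DifferentiableOn ℂ F {(0:ℂ)}ᶜ := by
      apply DifferentiableOn.div
      · exact hh.comp ((differentiable_id.const_mul a).differentiableOn)
          (fun w hw => by simpa using mul_ne_zero ha hw)
      · exact hh
      · intro w hw; exact hne w hw
    have hFb : ∀ w : ℂ, w ≠ 0 → ‖F w‖ ≤ C * C * ‖a‖ ^ d := by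
      intro w hw
      have hw0 : (0:ℝ) < ‖w‖ ^ d := Real.rpow_pos_of_pos (norm_pos_iff.2 hw) d
      have hnum : ‖h (a * w)‖ ≤ C * (‖a‖ ^ d * ‖w‖ ^ d) := by
        have := hup (a * w) (mul_ne_zero ha hw)
        rwa [norm_mul, Real.mul_rpow (norm_nonneg a) (norm_nonneg w)] at this
      have hden : ‖w‖ ^ d / C ≤ ‖h w‖ := hlow w hw
      have hdenpos : 0 < ‖w‖ ^ d / C := div_pos hw0 hC0
      calc ‖F w‖ = ‖h (a * w)‖ / ‖h w‖ := by rw [hF]; simp [norm_div]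
        _ ≤ (C * (‖a‖ ^ d * ‖w‖ ^ d)) / (‖w‖ ^ d / C) :=
            div_le_div₀ (by positivity) hnum hdenpos hden
        _ = C * C * ‖a‖ ^ d := by
            rw [div_div_eq_mul_div, div_eq_iff hw0.ne']; ring
    have h1' : (1:ℂ) ≠ 0 := one_ne_zero
    have := aux_const hFd hFb hz h1'
    rw [hF] at this
    simp only [mul_one] at this
    rw [div_eq_div_iff (hne z hz) (hne 1 h1')] at this
    linear_combination this
  -- derivative identity
  have hderiv : ∀ z : ℂ, z ≠ 0 → HasDerivAt h (deriv h z) z := by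
    intro z hz
    exact (hh.differentiableAt (isOpen_compl_singleton.mem_nhds hz)).hasDerivAt
  have hzd : ∀ z : ℂ, z ≠ 0 → deriv h z * z * h 1 = deriv h 1 * h z := by
    intro z hz
    have hmul : HasDerivAt (fun a : ℂ => a * z) z 1 := by
      simpa using (hasDerivAt_id (1:ℂ)).mul_const z
    have hz' : HasDerivAt h (deriv h z) ((fun a : ℂ => a * z) 1) := by
      simpa [one_mul] using hderiv z hz
    have hcomp : HasDerivAt (fun a : ℂ => h (a * z)) (deriv h z * z) 1 := by
      simpa [Function.comp_def] using hz'.comp 1 hmul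
    have H1 : HasDerivAt (fun a : ℂ => h (a * z) * h 1) (deriv h z * z * h 1) 1 :=
      hcomp.mul_const (h 1)
    have H2 : HasDerivAt (fun a : ℂ => h a * h z) (deriv h 1 * h z) 1 :=
      (hderiv 1 one_ne_zero).mul_const (h z)
    have heq : (fun a : ℂ => h (a * z) * h 1) =ᶠ[𝓝 (1:ℂ)] (fun a : ℂ => h a * h z) := by
      filter_upwards [isOpen_compl_singleton.mem_nhds (show (1:ℂ) ∈ {(0:ℂ)}ᶜ from one_ne_zero)]
        with a ha
      exact key a z ha hz
    exact H1.unique (H2.congr_of_eventuallyEq heq)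
  set α : ℂ := deriv h 1 / h 1 with hα
  have hαe : ∀ z : ℂ, z ≠ 0 → z * deriv h z = α * h z := by
    intro z hz
    have := hzd z hz
    rw [hα, div_mul_eq_mul_div, eq_div_iff (hne 1 one_ne_zero)]
    linear_combination this
  -- solve ODE along exp
  have hu : ∀ t : ℂ, h (Complex.exp t) = h 1 * Complex.exp (α * t) := by
    have hv : ∀ t : ℂ, HasDerivAt (fun s : ℂ => h (Complex.exp s) * Complex.exp (-(α * s)))
        0 t := by
      intro t
      have h1 : HasDerivAt (fun s : ℂ => h (Complex.exp s)) (α * h (Complex.exp t)) t := by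
        have hc : HasDerivAt (fun s : ℂ => h (Complex.exp s))
            (deriv h (Complex.exp t) * Complex.exp t) t :=
          (hderiv _ (Complex.exp_ne_zero t)).comp t (Complex.hasDerivAt_exp t)
        have e := hαe (Complex.exp t) (Complex.exp_ne_zero t)
        rwa [mul_comm (deriv h (Complex.exp t)) (Complex.exp t), e] at hc
      have h2 : HasDerivAt (fun s : ℂ => Complex.exp (-(α * s)))
          (-α * Complex.exp (-(α * t))) t := by
        have hlin : HasDerivAt (fun s : ℂ => -(α * s)) (-α) t := by
          simpa [Pi.neg_def] using ((hasDerivAt_id t).const_mul α).neg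
        simpa [mul_comm, Function.comp_def] using (Complex.hasDerivAt_exp (-(α * t))).comp t hlin
      have := h1.mul h2
      exact this.congr_deriv (by ring)
    have hvd : Differentiable ℂ (fun s : ℂ => h (Complex.exp s) * Complex.exp (-(α * s))) :=
      fun t => (hv t).differentiableAt
    have hv0 : ∀ t : ℂ, deriv (fun s : ℂ => h (Complex.exp s) * Complex.exp (-(α * s))) t = 0 :=
      fun t => (hv t).deriv
    intro t
    have := is_const_of_deriv_eq_zero hvd hv0 t 0
    simp only [mul_zero, neg_zero, Complex.exp_zero, mul_one] at this
    have hexpne := Complex.exp_ne_zero (-(α * t))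
    rw [← this, mul_assoc, ← Complex.exp_add]
    simp
  -- α is an integer
  obtain ⟨n, hn⟩ : ∃ n : ℤ, α = (n : ℂ) := by
    have h2 := hu (2 * Real.pi * Complex.I)
    rw [Complex.exp_two_pi_mul_I] at h2
    have hone : Complex.exp (α * (2 * Real.pi * Complex.I)) = 1 := by
      have h10 := hne 1 one_ne_zero
      field_simp at h2
      have e : α * (2 * ↑Real.pi * Complex.I) = α * 2 * ↑Real.pi * Complex.I := by ring
      rw [e]; exact h2.symm
    rw [Complex.exp_eq_one_iff] at hone
    obtain ⟨n, hn⟩ := hone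
    have h2pi : (2 * (Real.pi : ℂ) * Complex.I) ≠ 0 := by
      simp [Real.pi_ne_zero, Complex.I_ne_zero]
    exact ⟨n, mul_right_cancel₀ h2pi hn⟩
  -- h z = h 1 * z ^ n
  have hform : ∀ z : ℂ, z ≠ 0 → h z = h 1 * z ^ n := by
    intro z hz
    have := hu (Complex.log z)
    rwa [Complex.exp_log hz, hn, Complex.exp_int_mul, Complex.exp_log hz] at this
  -- d = n
  have hA : (0:ℝ) < ‖h 1‖ := norm_pos_iff.2 (hne 1 one_ne_zero)
  have hd : d = (n : ℝ) := by
    have hb : ∀ r : ℝ, 0 < r → r ^ d / C ≤ ‖h 1‖ * r ^ ((n:ℝ)) ∧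
        ‖h 1‖ * r ^ ((n:ℝ)) ≤ C * r ^ d := by
      intro r hr
      have hrz : (r : ℂ) ≠ 0 := by exact_mod_cast hr.ne'
      have hnrm : ‖(r:ℂ)‖ = r := by rw [Complex.norm_real, Real.norm_of_nonneg hr.le]
      have hhn : ‖h (r:ℂ)‖ = ‖h 1‖ * r ^ ((n:ℝ)) := by
        rw [hform (r:ℂ) hrz, norm_mul, norm_zpow, hnrm, Real.rpow_intCast]
      have l := hlow (r:ℂ) hrz
      have u := hup (r:ℂ) hrz
      rw [hnrm, hhn] at l u
      exact ⟨l, u⟩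
    by_contra hdn
    rcases lt_or_gt_of_ne (sub_ne_zero.2 hdn) with hlt | hgt
    · -- d < n
      apply aux_rpow (e := (n:ℝ) - d) (K := C / ‖h 1‖) (by linarith)
      intro r hr
      have h2 := (hb r hr).2
      rw [Real.rpow_sub hr, div_le_div_iff₀ (Real.rpow_pos_of_pos hr d) hA]
      nlinarith [h2]
    · -- d > n
      apply aux_rpow (e := d - (n:ℝ)) (K := C * ‖h 1‖) (by linarith)
      intro r hr
      have h1 := (hb r hr).1
      have h1' : r ^ d ≤ C * ‖h 1‖ * r ^ ((n:ℝ)) := by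
        have := (div_le_iff₀ hC0).1 h1
        nlinarith [this]
      rw [Real.rpow_sub hr, div_le_iff₀ (Real.rpow_pos_of_pos hr _)]
      linarith
  refine ⟨⟨n, hd, h 1, hne 1 one_ne_zero, hform⟩, ?_⟩
  rintro ⟨ψ, hψ⟩ hd1
  have hn1 : n = -1 := by
    have : (n : ℝ) = -1 := by rw [← hd, hd1]
    exact_mod_cast this
  have hw : ∀ t : ℂ, HasDerivAt (fun s : ℂ => ψ (Complex.exp s) - h 1 * s) 0 t := by
    intro t
    have h1 : HasDerivAt (fun s : ℂ => ψ (Complex.exp s)) (h (Complex.exp t) * Complex.exp t) t :=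
      (hψ _ (Complex.exp_ne_zero t)).comp t (Complex.hasDerivAt_exp t)
    have h2 : h (Complex.exp t) * Complex.exp t = h 1 := by
      rw [hform _ (Complex.exp_ne_zero t), hn1]
      field_simp [Complex.exp_ne_zero t]
    rw [h2] at h1
    simpa [Pi.sub_def] using h1.sub ((hasDerivAt_id t).const_mul (h 1))
  have hwd : Differentiable ℂ (fun s : ℂ => ψ (Complex.exp s) - h 1 * s) :=
    fun t => (hw t).differentiableAt
  have hw0 : ∀ t : ℂ, deriv (fun s : ℂ => ψ (Complex.exp s) - h 1 * s) t = 0 :=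
    fun t => (hw t).deriv
  have hcst := is_const_of_deriv_eq_zero hwd hw0 (2 * Real.pi * Complex.I) 0
  rw [Complex.exp_two_pi_mul_I] at hcst
  simp only [mul_zero, Complex.exp_zero, sub_zero] at hcst
  have h2pi0 : (h 1) * (2 * (Real.pi:ℂ) * Complex.I) = 0 := by linear_combination -hcst
  rcases mul_eq_zero.1 h2pi0 with h0 | h0
  · exact hne 1 one_ne_zero h0
  · have : (2 * (Real.pi : ℂ) * Complex.I) ≠ 0 := by
      simp [Real.pi_ne_zero, Complex.I_ne_zero]
    exact this h0
end
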